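/- If m and n are distinct positive integers and a ≥ 2 is an integer, then Φ_m(a) ≠ Φ_n(a), except when a = 2 and {m, n} = {2, 6}. -/
import Mathlib


open Polynomial

private lemma cyclo_int_lb {n : ℕ} (hn : 2 ≤ n) {x : ℤ} (hx : 2 ≤ x) :
    (x - 1) ^ n.totient < (cyclotomic n ℤ).eval x := by
  have h1 : (1 : ℝ) < (x : ℝ) := by exact_mod_cast lt_of_lt_of_le one_lt_two hx
  have H := sub_one_pow_totient_lt_cyclotomic_eval hn h1
  have hmap : ((x : ℝ)) = algebraMap ℤ ℝ x := by simp
  rw [hmap, cyclotomic.eval_apply (x : ℤ) n (algebraMap ℤ ℝ)] at H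
  have : ((x : ℝ) - 1) ^ n.totient < (((cyclotomic n ℤ).eval x : ℤ) : ℝ) := by
    simpa using H
  exact_mod_cast this

private lemma cyclo_int_ub (n : ℕ) {x : ℤ} (hx : 2 ≤ x) :
    (cyclotomic n ℤ).eval x ≤ (x + 1) ^ n.totient := by
  have h1 : (1 : ℝ) < (x : ℝ) := by exact_mod_cast lt_of_lt_of_le one_lt_two hx
  have H := cyclotomic_eval_le_add_one_pow_totient h1 n
  have hmap : ((x : ℝ)) = algebraMap ℤ ℝ x := by simp
  rw [hmap, cyclotomic.eval_apply (x : ℤ) n (algebraMap ℤ ℝ)] at H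
  have : (((cyclotomic n ℤ).eval x : ℤ) : ℝ) ≤ ((x : ℝ) + 1) ^ n.totient := by
    simpa using H
  exact_mod_cast this

/-- If `p ∣ Φ_n(a)`, then `n = p^v * ord_p(a)`. -/
private lemma key_form {p : ℕ} (hp : p.Prime) {a : ℤ} {n : ℕ} (hn : n ≠ 0)
    (hdvd : (p : ℤ) ∣ (cyclotomic n ℤ).eval a) :
    n = p ^ (n.factorization p) * orderOf (a : ZMod p) := by
  haveI : Fact p.Prime := ⟨hp⟩
  have htd : ¬ p ∣ ordCompl[p] n := Nat.not_dvd_ordCompl hp hn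
  haveI : NeZero ((ordCompl[p] n : ℕ) : ZMod p) :=
    ⟨by rw [Ne, ZMod.natCast_eq_zero_iff]; exact htd⟩
  have heq : p ^ n.factorization p * ordCompl[p] n = n :=
    Nat.ordProj_mul_ordCompl_eq_self n p
  have hzero : (((cyclotomic n ℤ).eval a : ℤ) : ZMod p) = 0 :=
    (ZMod.intCast_zmod_eq_zero_iff_dvd _ p).2 hdvd
  have hroot : IsRoot (cyclotomic (p ^ n.factorization p * ordCompl[p] n) (ZMod p))
      ((a : ZMod p)) := by
    rw [heq, IsRoot.def]
    rw [show ((a : ZMod p)) = (Int.castRingHom (ZMod p)) a from rfl,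
      cyclotomic.eval_apply a n (Int.castRingHom (ZMod p))]
    exact hzero
  have hprim : IsPrimitiveRoot ((a : ZMod p)) (ordCompl[p] n) :=
    (isRoot_cyclotomic_prime_pow_mul_iff_of_charP).1 hroot
  rw [← hprim.eq_orderOf, heq]

/-- Evaluation shift: `Φ_{p^j d}(a) = Φ_{p d}(a^(p^(j-1)))` for `j ≥ 1`. -/
private lemma cyclo_shift {p : ℕ} (hp : p.Prime) (d : ℕ) :
    ∀ j : ℕ, 1 ≤ j → ∀ a : ℤ,
      (cyclotomic (p ^ j * d) ℤ).eval a = (cyclotomic (p * d) ℤ).eval (a ^ (p ^ (j - 1)))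
  | 1, _, a => by simp
  | (j + 2), _, a => by
    have hdvd : p ∣ p ^ (j + 1) * d := Dvd.dvd.mul_right (dvd_pow_self p (Nat.succ_ne_zero j)) d
    have hexp := cyclotomic_expand_eq_cyclotomic hp hdvd ℤ
    have h1 : (cyclotomic (p ^ (j + 2) * d) ℤ).eval a
        = (cyclotomic (p ^ (j + 1) * d) ℤ).eval (a ^ p) := by
      have : p ^ (j + 1) * d * p = p ^ (j + 2) * d := by ring
      rw [← this, ← hexp, expand_eval]
    rw [h1, cyclo_shift hp d (j + 1) (Nat.succ_le_succ (Nat.zero_le j)) (a ^ p)]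
    congr 1
    rw [← pow_mul]
    congr 1
    simp [pow_succ, mul_comm]

set_option maxHeartbeats 1000000 in
private theorem cyclo_aux (m n : ℕ) (hm : 2 ≤ m) (hlt : m < n) (a : ℤ) (ha : 2 ≤ a)
    (h : (cyclotomic m ℤ).eval a = (cyclotomic n ℤ).eval a) :
    a = 2 ∧ m = 2 ∧ n = 6 := by
  set N := (cyclotomic m ℤ).eval a with hN
  have ha1 : (1 : ℤ) ≤ a - 1 := by omega
  have hNlb : (a - 1) ^ m.totient < N := cyclo_int_lb hm ha
  have hN2 : 2 ≤ N := by
    have : (0 : ℤ) < (a - 1) ^ m.totient := pow_pos (by omega) _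
    omega
  -- find a prime divisor
  obtain ⟨p, hp, hpdvd'⟩ := Nat.exists_prime_and_dvd (n := N.natAbs) (by omega)
  have hpdvd : (p : ℤ) ∣ N := Int.dvd_natAbs.1 (Int.natCast_dvd_natCast.2 hpdvd')
  haveI : Fact p.Prime := ⟨hp⟩
  set d := orderOf (a : ZMod p) with hd
  set l := m.factorization p with hl
  set k := n.factorization p with hk
  have hmf : m = p ^ l * d := key_form hp (by omega) hpdvd
  have hnf : n = p ^ k * d := key_form hp (by omega) (by rw [← h]; exact hpdvd)
  have hd0 : 0 < d := by
    rcases Nat.eq_zero_or_pos d with h0 | h0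
    · rw [h0, mul_zero] at hmf; omega
    · exact h0
  have hlk : l < k := by
    have hpow : p ^ l < p ^ k := by
      by_contra hc
      push_neg at hc
      have : n ≤ m := by rw [hmf, hnf]; exact Nat.mul_le_mul_right d hc
      omega
    exact (Nat.pow_lt_pow_iff_right hp.one_lt).1 hpow
  have ha0 : (a : ZMod p) ≠ 0 := by
    intro h0
    have h1 : ((a : ZMod p)) ^ d = 1 := pow_orderOf_eq_one _
    rw [h0, zero_pow hd0.ne'] at h1
    exact zero_ne_one h1
  have hddvd : d ∣ p - 1 := orderOf_dvd_of_pow_eq_one (ZMod.pow_card_sub_one_eq_one ha0)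
  have hp2 := hp.two_le
  have hdlt : d < p := lt_of_le_of_lt (Nat.le_of_dvd (by omega) hddvd) (by omega)
  have hpd2 : 2 ≤ p * d := le_trans hp2 (Nat.le_mul_of_pos_right p hd0)
  have hpnd : ¬ p ∣ d := fun hc => absurd (Nat.le_of_dvd hd0 hc) (by omega)
  rcases Nat.eq_zero_or_pos l with hl0 | hl1
  · -- l = 0 : m = d
    have hmd : m = d := by rw [hmf, hl0, pow_zero, one_mul]
    have hd2 : 2 ≤ d := by omega
    have hk1 : 1 ≤ k := by omega
    by_cases hk2 : 2 ≤ k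
    · -- k ≥ 2 : size contradiction
      obtain ⟨y, hy⟩ : ∃ y : ℤ, y = a ^ (p ^ (k - 1)) := ⟨_, rfl⟩
      have hny : N = (cyclotomic (p * d) ℤ).eval y := by
        rw [h, hnf, hy]; exact cyclo_shift hp d k hk1 a
      have h2e : 2 ≤ p ^ (k - 1) :=
        le_trans hp2 (le_self_pow₀ (by omega) (by omega))
      have hya : a ^ 2 ≤ y := by
        rw [hy]; exact pow_le_pow_right₀ (by linarith) h2e
      have hay : a + 2 ≤ y := by
        have hexp : (a - 2) * (a + 1) = a ^ 2 - a - 2 := by ring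
        have h0 : 0 ≤ (a - 2) * (a + 1) := mul_nonneg (by linarith) (by linarith)
        linarith
      have hcop : Nat.Coprime p d := (Nat.Prime.coprime_iff_not_dvd hp).2 hpnd
      have hφle : d.totient ≤ (p * d).totient := by
        rw [Nat.totient_mul hcop]
        exact Nat.le_mul_of_pos_left _ (Nat.totient_pos.2 hp.pos)
      have hub : N ≤ (a + 1) ^ d.totient := by
        rw [hN, hmd]; exact cyclo_int_ub _ ha
      have h1 : (a + 1) ^ d.totient ≤ (y - 1) ^ d.totient :=
        pow_le_pow_left₀ (by linarith) (by linarith) _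
      have h2 : (y - 1) ^ d.totient ≤ (y - 1) ^ (p * d).totient :=
        pow_le_pow_right₀ (by linarith) hφle
      have hlb : (y - 1) ^ (p * d).totient < N := by
        rw [hny]; exact cyclo_int_lb hpd2 (by linarith)
      linarith
    · -- k = 1 : n = p * d, use N² = Φ_d(a^p)
      have hk1' : k = 1 := by omega
      have hnpd : n = p * d := by rw [hnf, hk1', pow_one]
      have hexp := cyclotomic_expand_eq_cyclotomic_mul hp hpnd ℤ
      have hsq : (cyclotomic d ℤ).eval (a ^ p) = N * N := by
        have hC := congrArg (eval a) hexp
        rw [expand_eval, eval_mul] at hC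
        rw [hC]
        congr 1
        · rw [mul_comm d p, ← hnpd, ← h]
        · rw [hN, hmd]
      have hap2 : 2 ≤ a ^ p := le_trans ha (le_self_pow₀ (by omega) hp.pos.ne')
      have hlb2 : (a ^ p - 1) ^ d.totient < N * N := by
        rw [← hsq]; exact cyclo_int_lb hd2 hap2
      have hub1 : N ≤ (a + 1) ^ d.totient := by
        rw [hN, hmd]; exact cyclo_int_ub _ ha
      have hub2 : N * N ≤ ((a + 1) ^ 2) ^ d.totient := by
        calc N * N ≤ (a + 1) ^ d.totient * (a + 1) ^ d.totient :=
              mul_le_mul hub1 hub1 (by omega) (by positivity)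
          _ = ((a + 1) ^ 2) ^ d.totient := by
              rw [← pow_mul, two_mul, pow_add]
      have hkey : a ^ p - 1 < (a + 1) ^ 2 := by
        by_contra hc
        push_neg at hc
        have := pow_le_pow_left₀ (by positivity) hc d.totient
        linarith
      have hp3 : 3 ≤ p := by
        by_contra hc
        have hpe : p = 2 := by omega
        rw [hpe] at hddvd
        have : d = 1 := Nat.dvd_one.1 hddvd
        omega
      have hap3 : a ^ 3 ≤ a ^ p := pow_le_pow_right₀ (by omega) hp3
      have ha2 : a = 2 := by
        by_contra hc
        have ha3 : 3 ≤ a := by omega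
        nlinarith [mul_nonneg (mul_nonneg (by omega : (0:ℤ) ≤ a - 3) (by omega : (0:ℤ) ≤ a)) (by omega : (0:ℤ) ≤ a)]
      have hp3' : p = 3 := by
        by_contra hc
        have h4 : 4 ≤ p := by omega
        have h16 : (2 : ℤ) ^ 4 ≤ 2 ^ p := pow_le_pow_right₀ (by norm_num) h4
        rw [ha2] at hkey
        norm_num at hkey h16
        omega
      have hd2' : d = 2 := by
        rw [hp3'] at hddvd
        have := Nat.le_of_dvd (by norm_num) hddvd
        omega
      exact ⟨ha2, by omega, by rw [hnpd, hp3', hd2']⟩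
  · -- l ≥ 1 : strict monotonicity contradiction
    obtain ⟨x, hx⟩ : ∃ x : ℤ, x = a ^ (p ^ (l - 1)) := ⟨_, rfl⟩
    obtain ⟨y, hy⟩ : ∃ y : ℤ, y = a ^ (p ^ (k - 1)) := ⟨_, rfl⟩
    have hmx : N = (cyclotomic (p * d) ℤ).eval x := by
      rw [hN, hmf, hx]; exact cyclo_shift hp d l hl1 a
    have hny : N = (cyclotomic (p * d) ℤ).eval y := by
      rw [h, hnf, hy]; exact cyclo_shift hp d k (by omega) a
    have hx2 : 2 ≤ x := by
      rw [hx]; exact le_trans ha (le_self_pow₀ (by omega) (pow_pos hp.pos _).ne')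
    have hyx : x ^ (p ^ (k - l)) = y := by
      rw [hx, hy, ← pow_mul, ← pow_add]
      have he2 : l - 1 + (k - l) = k - 1 := by omega
      rw [he2]
    have h2e : 2 ≤ p ^ (k - l) := le_trans hp2 (le_self_pow₀ (by omega) (by omega))
    have hxsq : x ^ 2 ≤ y := by
      rw [← hyx]
      exact pow_le_pow_right₀ (by linarith) h2e
    have hxy2 : x + 2 ≤ y := by
      have hexp : (x - 2) * (x + 1) = x ^ 2 - x - 2 := by ring
      have h0 : 0 ≤ (x - 2) * (x + 1) := mul_nonneg (by linarith) (by linarith)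
      linarith
    have hub : N ≤ (x + 1) ^ (p * d).totient := by
      rw [hmx]; exact cyclo_int_ub _ hx2
    have hmid : (x + 1) ^ (p * d).totient ≤ (y - 1) ^ (p * d).totient :=
      pow_le_pow_left₀ (by linarith) (by linarith) _
    have hlb : (y - 1) ^ (p * d).totient < N := by
      rw [hny]; exact cyclo_int_lb hpd2 (by linarith)
    linarith

theorem cyclotomic_ne_at_int (m n : ℕ) (hm : 0 < m) (hn : 0 < n) (hmn : m ≠ n)
    (a : ℤ) (ha : 2 ≤ a)
    (h : (Polynomial.cyclotomic m ℤ).eval a = (Polynomial.cyclotomic n ℤ).eval a) :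
    a = 2 ∧ ({m, n} : Set ℕ) = {2, 6} := by
  have key : ∀ m' n' : ℕ, 0 < m' → m' < n' →
      (cyclotomic m' ℤ).eval a = (cyclotomic n' ℤ).eval a → a = 2 ∧ m' = 2 ∧ n' = 6 := by
    intro m' n' hm' hlt heq
    by_cases hm1 : m' = 1
    · exfalso
      subst hm1
      have hlb := cyclo_int_lb (show 2 ≤ n' by omega) ha
      have h1 : a - 1 ≤ (a - 1) ^ n'.totient :=
        le_self_pow₀ (by omega) (Nat.totient_pos.2 (by omega)).ne'
      rw [cyclotomic_one] at heq
      simp only [eval_sub, eval_X, eval_one] at heq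
      linarith [heq ▸ h1, hlb]
    · exact cyclo_aux m' n' (by omega) hlt a ha heq
  rcases lt_or_gt_of_ne hmn with hlt | hlt
  · obtain ⟨h2, hm2, hn6⟩ := key m n hm hlt h
    exact ⟨h2, by rw [hm2, hn6]⟩
  · obtain ⟨h2, h2', h6'⟩ := key n m hn hlt h.symm
    exact ⟨h2, by rw [h2', h6', Set.pair_comm]⟩
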